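/- arXiv:1703.04517 — 2 statements merged into one kernel-verified Lean document; each statement's English description precedes it below -/
import Mathlib

section
/- (Lemma 2(i)) For every nonempty K ⊆ I and every m ∈ {1,…,M}, ξ̂_{K|m}^{(n)} converges almost surely to ξ_{K|m} as n → +∞. -/
open MeasureTheory Filter Finset ProbabilityTheory Matrix

noncomputable section

namespace ArxivStmt

variable {Ω : Type} [MeasurableSpace Ω]

/-- The rank-one operator `u ⊗ v : h ↦ ⟨u, h⟩ v` on `ℝ^p`, as a matrix. -/
def tensor {p : ℕ} (u v : Fin p → ℝ) : Matrix (Fin p) (Fin p) ℝ :=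
  Matrix.of fun i j => v i * u j

/-- The coordinate projection `A_K : ℝ^p → ℝ^{card K}`, `x ↦ (x_i)_{i ∈ K}`, as a matrix. -/
def AK {p : ℕ} (K : Finset (Fin p)) : Matrix {x // x ∈ K} (Fin p) ℝ :=
  Matrix.of fun k j => if (k : Fin p) = j then 1 else 0

/-- `Q_{K} = A_K^* (A_K V A_K^*)⁻¹ A_K`. -/
def QK {p : ℕ} (K : Finset (Fin p)) (V : Matrix (Fin p) (Fin p) ℝ) : Matrix (Fin p) (Fin p) ℝ :=
  (AK K)ᵀ * (AK K * V * (AK K)ᵀ)⁻¹ * AK K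

/-- Squared euclidean norm on `ℝ^p`. -/
def esq {p : ℕ} (v : Fin p → ℝ) : ℝ := ∑ i, v i ^ 2

/-- `K_i = I ∖ {i}`. -/
def Kc {p : ℕ} (i : Fin p) : Finset (Fin p) := Finset.univ.erase i

/-- `p_m = P(U = m)`. -/
def pU {M : ℕ} (P : Measure Ω) (U : Ω → Fin M) (m : Fin M) : ℝ := (P {ω | U ω = m}).toReal

/-- `P(Z = ℓ, U = m)`. -/
def pZU {M q : ℕ} (P : Measure Ω) (U : Ω → Fin M) (Z : Ω → Fin q) (l : Fin q) (m : Fin M) : ℝ :=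
  (P {ω | Z ω = l ∧ U ω = m}).toReal

/-- `p_{ℓ|m} = P(Z = ℓ | U = m)`. -/
def pcond {M q : ℕ} (P : Measure Ω) (U : Ω → Fin M) (Z : Ω → Fin q) (l : Fin q) (m : Fin M) : ℝ :=
  pZU P U Z l m / pU P U m

/-- `μ_m = E(1_{U=m} X) / p_m`. -/
def muU {p M : ℕ} (P : Measure Ω) (X : Ω → Fin p → ℝ) (U : Ω → Fin M) (m : Fin M) :
    Fin p → ℝ :=
  fun i => (pU P U m)⁻¹ * ∫ ω, (if U ω = m then X ω i else 0) ∂P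

/-- `μ_{ℓ,m} = E(1_{Z=ℓ,U=m} X) / P(Z=ℓ,U=m)`. -/
def muZU {p M q : ℕ} (P : Measure Ω) (X : Ω → Fin p → ℝ) (U : Ω → Fin M) (Z : Ω → Fin q)
    (l : Fin q) (m : Fin M) : Fin p → ℝ :=
  fun i => (pZU P U Z l m)⁻¹ * ∫ ω, (if Z ω = l ∧ U ω = m then X ω i else 0) ∂P

/-- `V_m = E(1_{U=m} (X - μ_m) ⊗ (X - μ_m)) / p_m`. -/
def VU {p M : ℕ} (P : Measure Ω) (X : Ω → Fin p → ℝ) (U : Ω → Fin M) (m : Fin M) :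
    Matrix (Fin p) (Fin p) ℝ :=
  Matrix.of fun i j => (pU P U m)⁻¹ *
    ∫ ω, (if U ω = m then (X ω i - muU P X U m i) * (X ω j - muU P X U m j) else 0) ∂P

/-- `ξ_{K|m} = Σ_ℓ p_{ℓ|m}² ‖(I - V_m Q_{K|m})(μ_{ℓ,m} - μ_m)‖²`. -/
def xiKm {p M q : ℕ} (P : Measure Ω) (X : Ω → Fin p → ℝ) (U : Ω → Fin M) (Z : Ω → Fin q)
    (K : Finset (Fin p)) (m : Fin M) : ℝ :=
  ∑ l : Fin q, pcond P U Z l m ^ 2 *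
    esq ((1 - VU P X U m * QK K (VU P X U m)) *ᵥ (muZU P X U Z l m - muU P X U m))

/-- `ξ_K = Σ_m p_m² ξ_{K|m}`. -/
def xiK {p M q : ℕ} (P : Measure Ω) (X : Ω → Fin p → ℝ) (U : Ω → Fin M) (Z : Ω → Fin q)
    (K : Finset (Fin p)) : ℝ :=
  ∑ m : Fin M, pU P U m ^ 2 * xiKm P X U Z K m

/-! Empirical (sample) quantities. -/

/-- `N̂_m^{(n)}`. -/
def NU {M : ℕ} (Us : ℕ → Ω → Fin M) (m : Fin M) (n : ℕ) (ω : Ω) : ℝ :=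
  ∑ i ∈ Finset.range n, if Us i ω = m then 1 else 0

/-- `N̂_{ℓ,m}^{(n)}`. -/
def NZU {M q : ℕ} (Us : ℕ → Ω → Fin M) (Zs : ℕ → Ω → Fin q) (l : Fin q) (m : Fin M)
    (n : ℕ) (ω : Ω) : ℝ :=
  ∑ i ∈ Finset.range n, if Zs i ω = l ∧ Us i ω = m then 1 else 0

/-- `p̂_m^{(n)} = N̂_m^{(n)} / n`. -/
def pUhat {M : ℕ} (Us : ℕ → Ω → Fin M) (m : Fin M) (n : ℕ) (ω : Ω) : ℝ :=
  NU Us m n ω / n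

/-- `p̂_{ℓ|m}^{(n)} = N̂_{ℓ,m}^{(n)} / N̂_m^{(n)}`. -/
def pcondhat {M q : ℕ} (Us : ℕ → Ω → Fin M) (Zs : ℕ → Ω → Fin q) (l : Fin q) (m : Fin M)
    (n : ℕ) (ω : Ω) : ℝ :=
  NZU Us Zs l m n ω / NU Us m n ω

/-- `μ̂_m^{(n)}`. -/
def muUhat {p M : ℕ} (Xs : ℕ → Ω → Fin p → ℝ) (Us : ℕ → Ω → Fin M) (m : Fin M)
    (n : ℕ) (ω : Ω) : Fin p → ℝ :=
  fun j => (NU Us m n ω)⁻¹ * ∑ i ∈ Finset.range n, if Us i ω = m then Xs i ω j else 0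

/-- `μ̂_{ℓ,m}^{(n)}`. -/
def muZUhat {p M q : ℕ} (Xs : ℕ → Ω → Fin p → ℝ) (Us : ℕ → Ω → Fin M) (Zs : ℕ → Ω → Fin q)
    (l : Fin q) (m : Fin M) (n : ℕ) (ω : Ω) : Fin p → ℝ :=
  fun j => (NZU Us Zs l m n ω)⁻¹ *
    ∑ i ∈ Finset.range n, if Zs i ω = l ∧ Us i ω = m then Xs i ω j else 0

/-- `V̂_m^{(n)}`. -/
def VUhat {p M : ℕ} (Xs : ℕ → Ω → Fin p → ℝ) (Us : ℕ → Ω → Fin M) (m : Fin M)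
    (n : ℕ) (ω : Ω) : Matrix (Fin p) (Fin p) ℝ :=
  Matrix.of fun a b => (NU Us m n ω)⁻¹ * ∑ i ∈ Finset.range n,
    if Us i ω = m then
      (Xs i ω a - muUhat Xs Us m n ω a) * (Xs i ω b - muUhat Xs Us m n ω b) else 0

/-- `ξ̂_{K|m}^{(n)}`. -/
def xiKmhat {p M q : ℕ} (Xs : ℕ → Ω → Fin p → ℝ) (Us : ℕ → Ω → Fin M) (Zs : ℕ → Ω → Fin q)
    (K : Finset (Fin p)) (m : Fin M) (n : ℕ) (ω : Ω) : ℝ :=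
  ∑ l : Fin q, pcondhat Us Zs l m n ω ^ 2 *
    esq ((1 - VUhat Xs Us m n ω * QK K (VUhat Xs Us m n ω)) *ᵥ
      (muZUhat Xs Us Zs l m n ω - muUhat Xs Us m n ω))

/-- `ξ̂_K^{(n)}`. -/
def xiKhat {p M q : ℕ} (Xs : ℕ → Ω → Fin p → ℝ) (Us : ℕ → Ω → Fin M) (Zs : ℕ → Ω → Fin q)
    (K : Finset (Fin p)) (n : ℕ) (ω : Ω) : ℝ :=
  ∑ m : Fin M, pUhat Us m n ω ^ 2 * xiKmhat Xs Us Zs K m n ω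

/-- i.i.d. sample with the distribution of `(X, U, Z)`. -/
def IsIIDSample {p M q : ℕ} (P : Measure Ω) (X : Ω → Fin p → ℝ) (U : Ω → Fin M)
    (Z : Ω → Fin q) (Xs : ℕ → Ω → Fin p → ℝ) (Us : ℕ → Ω → Fin M) (Zs : ℕ → Ω → Fin q) :
    Prop :=
  (∀ i, Measurable fun ω => (Xs i ω, Us i ω, Zs i ω)) ∧
  iIndepFun (fun i ω => (Xs i ω, Us i ω, Zs i ω)) P ∧
  ∀ i, IdentDistrib (fun ω => (Xs i ω, Us i ω, Zs i ω)) (fun ω => (X ω, U ω, Z ω)) P P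


/-- i.i.d. sample with the distribution of `(X, U)`. -/
def IsIIDSample2 {p M : ℕ} (P : Measure Ω) (X : Ω → Fin p → ℝ) (U : Ω → Fin M)
    (Xs : ℕ → Ω → Fin p → ℝ) (Us : ℕ → Ω → Fin M) : Prop :=
  (∀ i, Measurable fun ω => (Xs i ω, Us i ω)) ∧
  iIndepFun (fun i ω => (Xs i ω, Us i ω)) P ∧
  ∀ i, IdentDistrib (fun ω => (Xs i ω, Us i ω)) (fun ω => (X ω, U ω)) P P


/-! ### Auxiliary lemmas for `stmt12` -/

/-- Key algebra identity for renormalizing empirical averages. -/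
lemma key_div (a s : ℝ) {n : ℝ} (hn : n ≠ 0) : (a / n)⁻¹ * (s / n) = a⁻¹ * s := by
  rcases eq_or_ne a 0 with rfl | ha
  · simp
  · field_simp

lemma AKt_mulVec_ne_zero {p : ℕ} (K : Finset (Fin p)) {x : {x // x ∈ K} → ℝ} (hx : x ≠ 0) :
    (AK K)ᵀ *ᵥ x ≠ 0 := by
  obtain ⟨k, hk⟩ := Function.ne_iff.1 hx
  intro h
  apply hk
  have := congrFun h (k : Fin p)
  simp only [Matrix.mulVec, dotProduct, AK, Matrix.transpose_apply, Matrix.of_apply,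
    Pi.zero_apply] at this
  rw [Finset.sum_congr rfl (fun k' _ => ?_)] at this
  · rwa [Finset.sum_ite_eq' Finset.univ k x, if_pos (Finset.mem_univ k)] at this
  · by_cases hkk : k' = k
    · simp [hkk]
    · rw [if_neg (fun hc => hkk (Subtype.ext hc)), zero_mul]
      simp [hkk]

lemma det_AVAt_ne_zero {p : ℕ} (K : Finset (Fin p)) {V : Matrix (Fin p) (Fin p) ℝ}
    (hV : V.PosDef) : (AK K * V * (AK K)ᵀ).det ≠ 0 := by
  intro h
  obtain ⟨v, hv0, hv⟩ := Matrix.exists_mulVec_eq_zero_iff.2 h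
  have hy := hV.dotProduct_mulVec_pos (AKt_mulVec_ne_zero K hv0)
  have : star v ⬝ᵥ (AK K * V * (AK K)ᵀ) *ᵥ v = star ((AK K)ᵀ *ᵥ v) ⬝ᵥ V *ᵥ ((AK K)ᵀ *ᵥ v) := by
    rw [star_trivial, star_trivial, ← Matrix.mulVec_mulVec, ← Matrix.mulVec_mulVec,
      dotProduct_mulVec, ← Matrix.mulVec_transpose]
  rw [hv, dotProduct_zero] at this
  rw [← this] at hy
  exact lt_irrefl _ hy

lemma continuousAt_QK {p : ℕ} (K : Finset (Fin p)) {V : Matrix (Fin p) (Fin p) ℝ}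
    (hV : V.PosDef) : ContinuousAt (QK K) V := by
  have hAB : Continuous fun W : Matrix (Fin p) (Fin p) ℝ => AK K * W * (AK K)ᵀ :=
    (continuous_const.matrix_mul continuous_id).matrix_mul continuous_const
  have hinv : ContinuousAt Inv.inv
      ((fun W : Matrix (Fin p) (Fin p) ℝ => AK K * W * (AK K)ᵀ) V) := by
    apply continuousAt_matrix_inv
    rw [Ring.inverse_eq_inv']
    exact continuousAt_inv₀ (det_AVAt_ne_zero K hV)
  have hL : Continuous fun X : Matrix {x // x ∈ K} {x // x ∈ K} ℝ => (AK K)ᵀ * X * AK K :=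
    (continuous_const.matrix_mul continuous_id).matrix_mul continuous_const
  have h1 : ContinuousAt (fun W : Matrix (Fin p) (Fin p) ℝ => (AK K * W * (AK K)ᵀ)⁻¹) V :=
    ContinuousAt.comp (g := Inv.inv)
      (f := fun W : Matrix (Fin p) (Fin p) ℝ => AK K * W * (AK K)ᵀ) (x := V)
      hinv hAB.continuousAt
  have h2 : ContinuousAt
      (fun W : Matrix (Fin p) (Fin p) ℝ => (AK K)ᵀ * (AK K * W * (AK K)ᵀ)⁻¹ * AK K) V :=
    ContinuousAt.comp (g := fun X : Matrix {x // x ∈ K} {x // x ∈ K} ℝ => (AK K)ᵀ * X * AK K)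
      (f := fun W : Matrix (Fin p) (Fin p) ℝ => (AK K * W * (AK K)ᵀ)⁻¹) (x := V)
      hL.continuousAt h1
  exact h2

lemma slln_comp {p M q : ℕ} (P : Measure Ω) (X : Ω → Fin p → ℝ) (U : Ω → Fin M) (Z : Ω → Fin q)
    (Xs : ℕ → Ω → Fin p → ℝ) (Us : ℕ → Ω → Fin M) (Zs : ℕ → Ω → Fin q)
    (hiid : IsIIDSample P X U Z Xs Us Zs)
    (f : (Fin p → ℝ) × Fin M × Fin q → ℝ) (hf : Measurable f)
    (hint : Integrable (fun ω => f (X ω, U ω, Z ω)) P) :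
    ∀ᵐ ω ∂P, Tendsto (fun n => (∑ i ∈ Finset.range n, f (Xs i ω, Us i ω, Zs i ω)) / n)
      atTop (nhds (∫ ω, f (X ω, U ω, Z ω) ∂P)) := by
  obtain ⟨hmeas, hindep, hident⟩ := hiid
  have hident' : ∀ i, IdentDistrib (fun ω => f (Xs i ω, Us i ω, Zs i ω))
      (fun ω => f (X ω, U ω, Z ω)) P P := fun i => (hident i).comp hf
  have h0 : Integrable (fun ω => f (Xs 0 ω, Us 0 ω, Zs 0 ω)) P :=
    (hident' 0).integrable_iff.2 hint
  have hpair : Pairwise (Function.onFun (IndepFun · · P) fun i ω => f (Xs i ω, Us i ω, Zs i ω)) :=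
    fun i j hij => (hindep.indepFun hij).comp hf hf
  have h := strong_law_ae_real (fun i ω => f (Xs i ω, Us i ω, Zs i ω)) h0 hpair
    (fun i => (hident' i).trans (hident' 0).symm)
  rw [(hident' 0).integral_eq] at h
  exact h

lemma integral_ite (P : Measure Ω) {c : Ω → Prop} [DecidablePred c]
    (hc : MeasurableSet {ω | c ω}) :
    ∫ ω, (if c ω then (1 : ℝ) else 0) ∂P = (P {ω | c ω}).toReal := by
  have heq : (fun ω => if c ω then (1 : ℝ) else 0) = {ω | c ω}.indicator fun _ => 1 := by
    funext ω; by_cases h : c ω <;> simp [Set.indicator_apply, h]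
  rw [heq, integral_indicator_const (1 : ℝ) hc, smul_eq_mul, mul_one]
  rfl

lemma int_g {p : ℕ} (P : Measure Ω) [IsProbabilityMeasure P] (X : Ω → Fin p → ℝ)
    (hX : Measurable X) (hmom : Integrable (fun ω => (∑ i, X ω i ^ 2) ^ 2) P) :
    Integrable (fun ω => ∑ i, X ω i ^ 2) P := by
  have hgm : Measurable fun ω => ∑ i, X ω i ^ 2 :=
    Finset.measurable_sum _ fun i _ => ((measurable_pi_apply i).comp hX).pow_const 2
  refine (hmom.add (integrable_const 1)).mono' hgm.aestronglyMeasurable ?_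
  filter_upwards with ω
  simp only [Pi.add_apply]
  have h := Finset.sum_nonneg fun i (_ : i ∈ Finset.univ) => sq_nonneg (X ω i)
  rw [Real.norm_eq_abs, abs_of_nonneg h]
  nlinarith [sq_nonneg ((∑ i, X ω i ^ 2) - 1)]

lemma int_ind (P : Measure Ω) [IsProbabilityMeasure P] {c : Ω → Prop} [DecidablePred c]
    (hc : MeasurableSet {ω | c ω}) :
    Integrable (fun ω => if c ω then (1 : ℝ) else 0) P := by
  refine (integrable_const (1 : ℝ)).mono'
    ((Measurable.ite hc measurable_const measurable_const).aestronglyMeasurable) ?_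
  filter_upwards with ω
  by_cases h : c ω <;> simp [h]

lemma int_ind_X {p : ℕ} (P : Measure Ω) [IsProbabilityMeasure P] (X : Ω → Fin p → ℝ)
    (hX : Measurable X) (hmom : Integrable (fun ω => (∑ i, X ω i ^ 2) ^ 2) P)
    {c : Ω → Prop} [DecidablePred c] (hc : MeasurableSet {ω | c ω}) (j : Fin p) :
    Integrable (fun ω => if c ω then X ω j else 0) P := by
  have hXj : Measurable fun ω => X ω j := (measurable_pi_apply j).comp hX
  refine ((integrable_const (1 : ℝ)).add (int_g P X hX hmom)).mono'
    ((Measurable.ite hc hXj measurable_const).aestronglyMeasurable) ?_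
  filter_upwards with ω
  simp only [Pi.add_apply]
  have h1 : X ω j ^ 2 ≤ ∑ i, X ω i ^ 2 :=
    Finset.single_le_sum (fun i _ => sq_nonneg (X ω i)) (Finset.mem_univ j)
  by_cases h : c ω <;> simp only [h, if_true, if_false]
  · rw [Real.norm_eq_abs]
    nlinarith [sq_nonneg (|X ω j| - 1), sq_abs (X ω j), abs_nonneg (X ω j)]
  · rw [norm_zero]
    nlinarith [sq_nonneg (X ω j)]

lemma int_ind_XX {p : ℕ} (P : Measure Ω) [IsProbabilityMeasure P] (X : Ω → Fin p → ℝ)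
    (hX : Measurable X) (hmom : Integrable (fun ω => (∑ i, X ω i ^ 2) ^ 2) P)
    {c : Ω → Prop} [DecidablePred c] (hc : MeasurableSet {ω | c ω}) (a b : Fin p) :
    Integrable (fun ω => if c ω then X ω a * X ω b else 0) P := by
  have hXa : Measurable fun ω => X ω a := (measurable_pi_apply a).comp hX
  have hXb : Measurable fun ω => X ω b := (measurable_pi_apply b).comp hX
  refine (int_g P X hX hmom).mono'
    ((Measurable.ite hc (hXa.mul hXb) measurable_const).aestronglyMeasurable) ?_
  filter_upwards with ω
  have h1 : X ω a ^ 2 ≤ ∑ i, X ω i ^ 2 :=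
    Finset.single_le_sum (fun i _ => sq_nonneg (X ω i)) (Finset.mem_univ a)
  have h2 : X ω b ^ 2 ≤ ∑ i, X ω i ^ 2 :=
    Finset.single_le_sum (fun i _ => sq_nonneg (X ω i)) (Finset.mem_univ b)
  by_cases h : c ω <;> simp only [h, if_true, if_false]
  · rw [Real.norm_eq_abs, abs_mul]
    nlinarith [sq_nonneg (|X ω a| - |X ω b|), sq_abs (X ω a), sq_abs (X ω b),
      abs_nonneg (X ω a), abs_nonneg (X ω b)]
  · rw [norm_zero]
    nlinarith [sq_nonneg (X ω a), sq_nonneg (X ω b)]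

lemma VU_eq {p M : ℕ} (P : Measure Ω) [IsProbabilityMeasure P] (X : Ω → Fin p → ℝ)
    (U : Ω → Fin M) (hX : Measurable X) (hU : Measurable U)
    (hmom : Integrable (fun ω => (∑ i, X ω i ^ 2) ^ 2) P)
    (m : Fin M) (hpm : 0 < pU P U m) (a b : Fin p) :
    VU P X U m a b = (pU P U m)⁻¹ * (∫ ω, (if U ω = m then X ω a * X ω b else 0) ∂P)
      - muU P X U m a * muU P X U m b := by
  have hc : MeasurableSet {ω | U ω = m} := hU (measurableSet_singleton m)
  have hsj : ∀ j, ∫ ω, (if U ω = m then X ω j else 0) ∂P = pU P U m * muU P X U m j := by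
    intro j
    rw [muU]
    field_simp
  have key : (fun ω => if U ω = m then (X ω a - muU P X U m a) * (X ω b - muU P X U m b) else 0)
      = fun ω => ((if U ω = m then X ω a * X ω b else 0)
        - muU P X U m b * (if U ω = m then X ω a else 0)
        - muU P X U m a * (if U ω = m then X ω b else 0))
        + muU P X U m a * muU P X U m b * (if U ω = m then 1 else 0) := by
    funext ω
    by_cases h : U ω = m <;> simp only [h, if_true, if_false] <;> ring
  have iXX := int_ind_XX P X hX hmom hc a b
  have iXa := int_ind_X P X hX hmom hc a
  have iXb := int_ind_X P X hX hmom hc b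
  have iI := int_ind P hc
  show (pU P U m)⁻¹ * ∫ ω, (if U ω = m then (X ω a - muU P X U m a) * (X ω b - muU P X U m b)
    else 0) ∂P = _
  have iXa' : Integrable (fun ω => muU P X U m b * (if U ω = m then X ω a else 0)) P :=
    iXa.const_mul _
  have iXb' : Integrable (fun ω => muU P X U m a * (if U ω = m then X ω b else 0)) P :=
    iXb.const_mul _
  have iI' : Integrable
      (fun ω => muU P X U m a * muU P X U m b * (if U ω = m then (1:ℝ) else 0)) P :=
    iI.const_mul _
  have iA : Integrable (fun ω => (if U ω = m then X ω a * X ω b else 0)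
      - muU P X U m b * (if U ω = m then X ω a else 0)) P := iXX.sub iXa'
  have iB : Integrable (fun ω => (if U ω = m then X ω a * X ω b else 0)
      - muU P X U m b * (if U ω = m then X ω a else 0)
      - muU P X U m a * (if U ω = m then X ω b else 0)) P := iA.sub iXb'
  rw [key, integral_add iB iI', integral_sub iA iXb',
    integral_sub iXX iXa', integral_const_mul, integral_const_mul,
    integral_const_mul, integral_ite P hc, hsj a, hsj b]
  show (pU P U m)⁻¹ * (∫ ω, (if U ω = m then X ω a * X ω b else 0) ∂P
      - muU P X U m b * (pU P U m * muU P X U m a)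
      - muU P X U m a * (pU P U m * muU P X U m b)
      + muU P X U m a * muU P X U m b * pU P U m) = _
  field_simp
  ring

lemma VUhat_eq {p M : ℕ} (Xs : ℕ → Ω → Fin p → ℝ) (Us : ℕ → Ω → Fin M) (m : Fin M)
    (n : ℕ) (ω : Ω) (h : NU Us m n ω ≠ 0) (a b : Fin p) :
    VUhat Xs Us m n ω a b = (NU Us m n ω)⁻¹ *
      (∑ i ∈ Finset.range n, if Us i ω = m then Xs i ω a * Xs i ω b else 0)
      - muUhat Xs Us m n ω a * muUhat Xs Us m n ω b := by
  have hS : ∀ j, (∑ i ∈ Finset.range n, if Us i ω = m then Xs i ω j else 0)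
      = NU Us m n ω * muUhat Xs Us m n ω j := by
    intro j
    rw [muUhat]
    field_simp
  have key : ∀ i, (if Us i ω = m then
        (Xs i ω a - muUhat Xs Us m n ω a) * (Xs i ω b - muUhat Xs Us m n ω b) else 0)
      = ((if Us i ω = m then Xs i ω a * Xs i ω b else 0)
        - muUhat Xs Us m n ω b * (if Us i ω = m then Xs i ω a else 0)
        - muUhat Xs Us m n ω a * (if Us i ω = m then Xs i ω b else 0))
        + muUhat Xs Us m n ω a * muUhat Xs Us m n ω b * (if Us i ω = m then 1 else 0) := by
    intro i
    by_cases hi : Us i ω = m <;> simp only [hi, if_true, if_false] <;> ring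
  show (NU Us m n ω)⁻¹ * (∑ i ∈ Finset.range n, if Us i ω = m then
    (Xs i ω a - muUhat Xs Us m n ω a) * (Xs i ω b - muUhat Xs Us m n ω b) else 0) = _
  rw [Finset.sum_congr rfl fun i _ => key i, Finset.sum_add_distrib, Finset.sum_sub_distrib,
    Finset.sum_sub_distrib, ← Finset.mul_sum, ← Finset.mul_sum, ← Finset.mul_sum, hS a, hS b]
  have hNU : (∑ i ∈ Finset.range n, if Us i ω = m then (1 : ℝ) else 0) = NU Us m n ω := rfl
  rw [hNU]
  field_simp
  ring

/-- Lemma 2(i): almost sure consistency of `ξ̂_{K|m}`. -/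
theorem stmt12
    {Ω : Type} [MeasurableSpace Ω] (P : Measure Ω) [IsProbabilityMeasure P]
    (p q M : ℕ) (hp : 1 ≤ p) (hq : 2 ≤ q) (hM : 1 ≤ M)
    (X : Ω → Fin p → ℝ) (U : Ω → Fin M) (Z : Ω → Fin q)
    (hX : Measurable X) (hU : Measurable U) (hZ : Measurable Z)
    (hmom : Integrable (fun ω => (∑ i, X ω i ^ 2) ^ 2) P)
    (hpU : ∀ m, 0 < pU P U m) (hpZU : ∀ l m, 0 < pZU P U Z l m)
    (hV : ∀ m, (VU P X U m).PosDef)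
    (Xs : ℕ → Ω → Fin p → ℝ) (Us : ℕ → Ω → Fin M) (Zs : ℕ → Ω → Fin q)
    (hiid : IsIIDSample P X U Z Xs Us Zs)
    :
    ∀ (K : Finset (Fin p)), K.Nonempty → ∀ m : Fin M,
      ∀ᵐ ω ∂P,
        Tendsto (fun n => xiKmhat Xs Us Zs K m n ω) atTop (nhds (xiKm P X U Z K m)) := by
  intro K hK m
  classical
  have hsetU : MeasurableSet {ω | U ω = m} := hU (measurableSet_singleton m)
  have hsetZU : ∀ l : Fin q, MeasurableSet {ω | Z ω = l ∧ U ω = m} := fun l =>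
    (hZ (measurableSet_singleton l)).inter (hU (measurableSet_singleton m))
  have hmXj : ∀ j : Fin p, Measurable fun t : (Fin p → ℝ) × Fin M × Fin q => t.1 j :=
    fun j => (measurable_pi_apply j).comp measurable_fst
  have hmU2 : Measurable fun t : (Fin p → ℝ) × Fin M × Fin q => t.2.1 :=
    measurable_fst.comp measurable_snd
  have hmZ2 : Measurable fun t : (Fin p → ℝ) × Fin M × Fin q => t.2.2 :=
    measurable_snd.comp measurable_snd
  have hsetU' : MeasurableSet {t : (Fin p → ℝ) × Fin M × Fin q | t.2.1 = m} :=
    hmU2 (measurableSet_singleton m)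
  have hsetZU' : ∀ l, MeasurableSet {t : (Fin p → ℝ) × Fin M × Fin q | t.2.2 = l ∧ t.2.1 = m} :=
    fun l => (hmZ2 (measurableSet_singleton l)).inter (hmU2 (measurableSet_singleton m))
  have hN : ∀ᵐ ω ∂P, Tendsto (fun n => NU Us m n ω / n) atTop (nhds (pU P U m)) := by
    have e1 : ∫ ω, (if U ω = m then (1:ℝ) else 0) ∂P = pU P U m := by
      rw [integral_ite P hsetU]; rfl
    rw [← e1]
    exact slln_comp P X U Z Xs Us Zs hiid (fun t => if t.2.1 = m then (1:ℝ) else 0)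
      (Measurable.ite hsetU' measurable_const measurable_const) (int_ind P hsetU)
  have hNZ : ∀ᵐ ω ∂P, ∀ l : Fin q,
      Tendsto (fun n => NZU Us Zs l m n ω / n) atTop (nhds (pZU P U Z l m)) := by
    rw [ae_all_iff]
    intro l
    have e2 : ∫ ω, (if Z ω = l ∧ U ω = m then (1:ℝ) else 0) ∂P = pZU P U Z l m := by
      rw [integral_ite P (hsetZU l)]; rfl
    rw [← e2]
    exact slln_comp P X U Z Xs Us Zs hiid (fun t => if t.2.2 = l ∧ t.2.1 = m then (1:ℝ) else 0)
      (Measurable.ite (hsetZU' l) measurable_const measurable_const) (int_ind P (hsetZU l))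
  have hS : ∀ᵐ ω ∂P, ∀ j : Fin p,
      Tendsto (fun n => (∑ i ∈ Finset.range n, if Us i ω = m then Xs i ω j else 0) / n)
        atTop (nhds (∫ ω', (if U ω' = m then X ω' j else 0) ∂P)) := by
    rw [ae_all_iff]
    intro j
    exact slln_comp P X U Z Xs Us Zs hiid (fun t => if t.2.1 = m then t.1 j else 0)
      (Measurable.ite hsetU' (hmXj j) measurable_const) (int_ind_X P X hX hmom hsetU j)
  have hT : ∀ᵐ ω ∂P, ∀ l : Fin q, ∀ j : Fin p,
      Tendsto (fun n => (∑ i ∈ Finset.range n,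
          if Zs i ω = l ∧ Us i ω = m then Xs i ω j else 0) / n)
        atTop (nhds (∫ ω', (if Z ω' = l ∧ U ω' = m then X ω' j else 0) ∂P)) := by
    rw [ae_all_iff]
    intro l
    rw [ae_all_iff]
    intro j
    exact slln_comp P X U Z Xs Us Zs hiid
      (fun t => if t.2.2 = l ∧ t.2.1 = m then t.1 j else 0)
      (Measurable.ite (hsetZU' l) (hmXj j) measurable_const)
      (int_ind_X P X hX hmom (hsetZU l) j)
  have hW : ∀ᵐ ω ∂P, ∀ a b : Fin p,
      Tendsto (fun n => (∑ i ∈ Finset.range n,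
          if Us i ω = m then Xs i ω a * Xs i ω b else 0) / n)
        atTop (nhds (∫ ω', (if U ω' = m then X ω' a * X ω' b else 0) ∂P)) := by
    rw [ae_all_iff]
    intro a
    rw [ae_all_iff]
    intro b
    exact slln_comp P X U Z Xs Us Zs hiid (fun t => if t.2.1 = m then t.1 a * t.1 b else 0)
      (Measurable.ite hsetU' ((hmXj a).mul (hmXj b)) measurable_const)
      (int_ind_XX P X hX hmom hsetU a b)
  filter_upwards [hN, hNZ, hS, hT, hW] with ω hN hNZ hS hT hW
  have hpm := hpU m
  have hnz : pU P U m ≠ 0 := hpm.ne'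
  have hZnz : ∀ l, pZU P U Z l m ≠ 0 := fun l => (hpZU l m).ne'
  have hmuhat : ∀ j, Tendsto (fun n => muUhat Xs Us m n ω j) atTop (nhds (muU P X U m j)) := by
    intro j
    refine Filter.Tendsto.congr' ?_ ((hN.inv₀ hnz).mul (hS j))
    filter_upwards [eventually_ne_atTop 0] with n hn
    exact key_div _ _ (Nat.cast_ne_zero.2 hn)
  have hmuZhat : ∀ l j, Tendsto (fun n => muZUhat Xs Us Zs l m n ω j) atTop
      (nhds (muZU P X U Z l m j)) := by
    intro l j
    refine Filter.Tendsto.congr' ?_ (((hNZ l).inv₀ (hZnz l)).mul (hT l j))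
    filter_upwards [eventually_ne_atTop 0] with n hn
    exact key_div _ _ (Nat.cast_ne_zero.2 hn)
  have hphat : ∀ l, Tendsto (fun n => pcondhat Us Zs l m n ω) atTop
      (nhds (pcond P U Z l m)) := by
    intro l
    refine Filter.Tendsto.congr' ?_ ((hNZ l).div hN hnz)
    filter_upwards [eventually_ne_atTop 0] with n hn
    show NZU Us Zs l m n ω / n / (NU Us m n ω / n) = pcondhat Us Zs l m n ω
    rw [div_eq_inv_mul, key_div _ _ (Nat.cast_ne_zero.2 hn), ← div_eq_inv_mul]
    rfl
  have hev : ∀ᶠ n in atTop, NU Us m n ω ≠ 0 := by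
    filter_upwards [hN.eventually (eventually_gt_nhds hpm)] with n hn
    intro h0
    rw [h0, zero_div] at hn
    exact lt_irrefl _ hn
  have hVab : ∀ a b, Tendsto (fun n => VUhat Xs Us m n ω a b) atTop
      (nhds (VU P X U m a b)) := by
    intro a b
    rw [VU_eq P X U hX hU hmom m hpm a b]
    refine Filter.Tendsto.congr' ?_
      (((hN.inv₀ hnz).mul (hW a b)).sub ((hmuhat a).mul (hmuhat b)))
    filter_upwards [hev, eventually_ne_atTop 0] with n h1 h2
    rw [VUhat_eq Xs Us m n ω h1 a b, key_div _ _ (Nat.cast_ne_zero.2 h2)]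
  have hVmat : Tendsto (fun n => VUhat Xs Us m n ω) atTop (nhds (VU P X U m)) :=
    tendsto_pi_nhds.2 fun a => tendsto_pi_nhds.2 fun b => hVab a b
  have hQ : Tendsto (fun n => QK K (VUhat Xs Us m n ω)) atTop
      (nhds (QK K (VU P X U m))) :=
    Filter.Tendsto.comp (continuousAt_QK K (hV m)) hVmat
  have hVQ : Tendsto (fun n => VUhat Xs Us m n ω * QK K (VUhat Xs Us m n ω)) atTop
      (nhds (VU P X U m * QK K (VU P X U m))) := by
    have hc : Continuous fun pr : Matrix (Fin p) (Fin p) ℝ × Matrix (Fin p) (Fin p) ℝ =>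
        pr.1 * pr.2 := continuous_fst.matrix_mul continuous_snd
    exact (hc.tendsto _).comp (hVmat.prodMk_nhds hQ)
  have hMmat : Tendsto (fun n => 1 - VUhat Xs Us m n ω * QK K (VUhat Xs Us m n ω)) atTop
      (nhds (1 - VU P X U m * QK K (VU P X U m))) := tendsto_const_nhds.sub hVQ
  have hMe : ∀ a b : Fin p, Tendsto
      (fun n => (1 - VUhat Xs Us m n ω * QK K (VUhat Xs Us m n ω)) a b) atTop
      (nhds ((1 - VU P X U m * QK K (VU P X U m)) a b)) := fun a b =>
    tendsto_pi_nhds.1 (tendsto_pi_nhds.1 hMmat a) b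
  have hvl : ∀ l j, Tendsto
      (fun n => (muZUhat Xs Us Zs l m n ω - muUhat Xs Us m n ω) j) atTop
      (nhds ((muZU P X U Z l m - muU P X U m) j)) := fun l j =>
    (hmuZhat l j).sub (hmuhat j)
  have hMv : ∀ l (i : Fin p), Tendsto
      (fun n => ((1 - VUhat Xs Us m n ω * QK K (VUhat Xs Us m n ω)) *ᵥ
        (muZUhat Xs Us Zs l m n ω - muUhat Xs Us m n ω)) i) atTop
      (nhds (((1 - VU P X U m * QK K (VU P X U m)) *ᵥ
        (muZU P X U Z l m - muU P X U m)) i)) := by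
    intro l i
    show Tendsto (fun n => ∑ j, (1 - VUhat Xs Us m n ω * QK K (VUhat Xs Us m n ω)) i j *
        (muZUhat Xs Us Zs l m n ω - muUhat Xs Us m n ω) j) atTop
      (nhds (∑ j, (1 - VU P X U m * QK K (VU P X U m)) i j *
        (muZU P X U Z l m - muU P X U m) j))
    exact tendsto_finset_sum _ fun j _ => (hMe i j).mul (hvl l j)
  have hesq : ∀ l, Tendsto
      (fun n => esq ((1 - VUhat Xs Us m n ω * QK K (VUhat Xs Us m n ω)) *ᵥ
        (muZUhat Xs Us Zs l m n ω - muUhat Xs Us m n ω))) atTop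
      (nhds (esq ((1 - VU P X U m * QK K (VU P X U m)) *ᵥ
        (muZU P X U Z l m - muU P X U m)))) := by
    intro l
    show Tendsto (fun n => ∑ i, (((1 - VUhat Xs Us m n ω * QK K (VUhat Xs Us m n ω)) *ᵥ
        (muZUhat Xs Us Zs l m n ω - muUhat Xs Us m n ω)) i) ^ 2) atTop
      (nhds (∑ i, (((1 - VU P X U m * QK K (VU P X U m)) *ᵥ
        (muZU P X U Z l m - muU P X U m)) i) ^ 2))
    exact tendsto_finset_sum _ fun i _ => (hMv l i).pow 2
  show Tendsto (fun n => ∑ l : Fin q, pcondhat Us Zs l m n ω ^ 2 *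
      esq ((1 - VUhat Xs Us m n ω * QK K (VUhat Xs Us m n ω)) *ᵥ
        (muZUhat Xs Us Zs l m n ω - muUhat Xs Us m n ω))) atTop
    (nhds (∑ l : Fin q, pcond P U Z l m ^ 2 *
      esq ((1 - VU P X U m * QK K (VU P X U m)) *ᵥ
        (muZU P X U Z l m - muU P X U m))))
  exact tendsto_finset_sum _ fun l _ => ((hphat l).pow 2).mul (hesq l)


end ArxivStmt
end
end

section
/- (Theorem 1(i)) For every nonempty K ⊆ I, ξ̂_K^{(n)} converges almost surely to ξ_K as n → +∞. -/
open MeasureTheory Filter Finset ProbabilityTheory Matrix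

noncomputable section

namespace ArxivStmt

variable {Ω : Type} [MeasurableSpace Ω]

/-! ### Auxiliary lemmas -/

section AuxLemmas

lemma aux_dd (c a : ℝ) {n : ℝ} (hn : n ≠ 0) : (c / n) / (a / n) = c / a := by
  rcases eq_or_ne a 0 with rfl | ha
  · simp
  · field_simp

lemma tendsto_ratio {c a : ℕ → ℝ} {C A : ℝ}
    (hc : Tendsto (fun n => c n / n) atTop (nhds C))
    (ha : Tendsto (fun n => a n / n) atTop (nhds A)) (hA : A ≠ 0) :
    Tendsto (fun n => c n / a n) atTop (nhds (C / A)) := by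
  apply (hc.div ha hA).congr'
  filter_upwards [eventually_ge_atTop 1] with n hn
  exact aux_dd _ _ (by exact_mod_cast Nat.one_le_iff_ne_zero.mp hn)

lemma tendsto_matrix {m n : ℕ} {f : ℕ → Matrix (Fin m) (Fin n) ℝ} {A : Matrix (Fin m) (Fin n) ℝ}
    (h : ∀ i j, Tendsto (fun k => f k i j) atTop (nhds (A i j))) :
    Tendsto f atTop (nhds A) := by
  exact tendsto_pi_nhds.2 fun i => tendsto_pi_nhds.2 fun j => h i j

lemma AK_transpose_mulVec_ne {p : ℕ} (K : Finset (Fin p)) {x : {y // y ∈ K} → ℝ} (hx : x ≠ 0) :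
    (AK K)ᵀ *ᵥ x ≠ 0 := by
  obtain ⟨k, hk⟩ : ∃ k, x k ≠ 0 := Function.ne_iff.mp hx
  intro h
  apply hk
  have := congrFun h (k : Fin p)
  rw [Matrix.mulVec, dotProduct] at this
  simp only [Matrix.transpose_apply, AK, Matrix.of_apply, Pi.zero_apply] at this
  rw [Finset.sum_eq_single k (by intro b _ hb; simp [Subtype.coe_injective.ne hb])
    (by simp)] at this
  simpa using this

lemma conjT_AKT {p : ℕ} (K : Finset (Fin p)) : ((AK K)ᵀ)ᴴ = AK K := by
  ext i j
  simp [Matrix.conjTranspose_apply]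

lemma posdef_conj {p : ℕ} (K : Finset (Fin p)) {V : Matrix (Fin p) (Fin p) ℝ}
    (hV : V.PosDef) : (AK K * V * (AK K)ᵀ).PosDef := by
  refine Matrix.PosDef.of_dotProduct_mulVec_pos ?_ ?_
  · nth_rewrite 1 [← conjT_AKT K]
    exact Matrix.isHermitian_conjTranspose_mul_mul _ hV.1
  · intro x hx
    nth_rewrite 1 [← conjT_AKT K]
    simpa only [star_mulVec, dotProduct_mulVec, Matrix.vecMul_vecMul] using
      hV.dotProduct_mulVec_pos (AK_transpose_mulVec_ne K hx)

lemma slln {p M q : ℕ} (P : Measure Ω) [IsProbabilityMeasure P]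
    {X : Ω → Fin p → ℝ} {U : Ω → Fin M} {Z : Ω → Fin q}
    {Xs : ℕ → Ω → Fin p → ℝ} {Us : ℕ → Ω → Fin M} {Zs : ℕ → Ω → Fin q}
    (hiid : IsIIDSample P X U Z Xs Us Zs)
    (g : (Fin p → ℝ) × Fin M × Fin q → ℝ) (hg : Measurable g)
    (hint : Integrable (fun ω => g (X ω, U ω, Z ω)) P) :
    ∀ᵐ ω ∂P, Tendsto (fun n => (∑ i ∈ Finset.range n, g (Xs i ω, Us i ω, Zs i ω)) / n) atTop
      (nhds (∫ ω, g (X ω, U ω, Z ω) ∂P)) := by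
  set Y : ℕ → Ω → ℝ := fun i ω => g (Xs i ω, Us i ω, Zs i ω) with hY
  have hid : ∀ i, IdentDistrib (Y i) (fun ω => g (X ω, U ω, Z ω)) P P :=
    fun i => (hiid.2.2 i).comp hg
  have hident : ∀ i, IdentDistrib (Y i) (Y 0) P P := fun i => (hid i).trans (hid 0).symm
  have hint0 : Integrable (Y 0) P := (hid 0).integrable_iff.mpr hint
  have hindep : Pairwise (Function.onFun (IndepFun · · P) Y) := by
    intro i j hij
    exact ((hiid.2.1.indepFun hij).comp hg hg)
  have h := strong_law_ae_real Y hint0 hindep hident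
  rw [show ∫ ω, Y 0 ω ∂P = ∫ ω, g (X ω, U ω, Z ω) ∂P from (hid 0).integral_eq] at h
  exact h

lemma VUhat_apply {p M : ℕ} (Xs : ℕ → Ω → Fin p → ℝ) (Us : ℕ → Ω → Fin M) (m : Fin M)
    (n : ℕ) (ω : Ω) (a b : Fin p) :
    VUhat Xs Us m n ω a b
      = (NU Us m n ω)⁻¹ *
          (∑ i ∈ Finset.range n, if Us i ω = m then Xs i ω a * Xs i ω b else 0)
        - muUhat Xs Us m n ω a * muUhat Xs Us m n ω b := by
  rcases eq_or_ne (NU Us m n ω) 0 with h | h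
  · simp [VUhat, muUhat, h]
  · have expand : ∀ i ∈ Finset.range n,
        (if Us i ω = m then
            (Xs i ω a - muUhat Xs Us m n ω a) * (Xs i ω b - muUhat Xs Us m n ω b) else 0)
        = (if Us i ω = m then Xs i ω a * Xs i ω b else 0)
          - muUhat Xs Us m n ω a * (if Us i ω = m then Xs i ω b else 0)
          - muUhat Xs Us m n ω b * (if Us i ω = m then Xs i ω a else 0)
          + muUhat Xs Us m n ω a * muUhat Xs Us m n ω b *
              (if Us i ω = m then 1 else 0) := by
      intro i _
      by_cases hc : Us i ω = m <;> simp [hc] <;> ring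
    have hgoal : VUhat Xs Us m n ω a b = (NU Us m n ω)⁻¹ *
        ∑ i ∈ Finset.range n,
          (if Us i ω = m then
            (Xs i ω a - muUhat Xs Us m n ω a) * (Xs i ω b - muUhat Xs Us m n ω b) else 0) := rfl
    rw [hgoal, Finset.sum_congr rfl expand]
    rw [Finset.sum_add_distrib, Finset.sum_sub_distrib, Finset.sum_sub_distrib,
      ← Finset.mul_sum, ← Finset.mul_sum, ← Finset.mul_sum]
    have hN : (∑ i ∈ Finset.range n, if Us i ω = m then (1:ℝ) else 0) = NU Us m n ω := rfl
    rw [hN]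
    set N := NU Us m n ω with hNdef
    set Ca := ∑ i ∈ Finset.range n, if Us i ω = m then Xs i ω a else 0 with hCa
    set Cb := ∑ i ∈ Finset.range n, if Us i ω = m then Xs i ω b else 0 with hCb
    set E := ∑ i ∈ Finset.range n, if Us i ω = m then Xs i ω a * Xs i ω b else 0 with hE
    have hma : muUhat Xs Us m n ω a = N⁻¹ * Ca := rfl
    have hmb : muUhat Xs Us m n ω b = N⁻¹ * Cb := rfl
    rw [hma, hmb]
    field_simp
    ring

lemma integrable_S {p : ℕ} {P : Measure Ω} [IsProbabilityMeasure P] {X : Ω → Fin p → ℝ}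
    (hX : Measurable X) (hmom : Integrable (fun ω => (∑ i, X ω i ^ 2) ^ 2) P) :
    Integrable (fun ω => ∑ i, X ω i ^ 2) P := by
  have hmeas : Measurable (fun ω => ∑ i, X ω i ^ 2) :=
    Finset.measurable_sum _ fun i _ => ((measurable_pi_apply i).comp hX).pow_const 2
  refine Integrable.mono' ((hmom.add (integrable_const 1)).div_const 2)
    hmeas.aestronglyMeasurable ?_
  filter_upwards with ω
  have h0 : (0:ℝ) ≤ ∑ i, X ω i ^ 2 := Finset.sum_nonneg fun i _ => sq_nonneg _
  rw [Real.norm_eq_abs, abs_of_nonneg h0]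
  simp only [Pi.add_apply]
  nlinarith [sq_nonneg ((∑ i, X ω i ^ 2) - 1)]

lemma integrable_cond {p : ℕ} {P : Measure Ω} [IsProbabilityMeasure P] {X : Ω → Fin p → ℝ}
    {c : Ω → Prop} [DecidablePred c] (hc : MeasurableSet {ω | c ω})
    {f : Ω → ℝ} (hf : Measurable f)
    {g : Ω → ℝ} (hg : Integrable g P) (hbound : ∀ ω, |f ω| ≤ g ω) :
    Integrable (fun ω => if c ω then f ω else 0) P := by
  refine Integrable.mono' hg (Measurable.ite hc hf measurable_const).aestronglyMeasurable ?_
  filter_upwards with ω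
  rw [Real.norm_eq_abs]
  by_cases h : c ω
  · simp only [if_pos h]; exact hbound ω
  · simp only [if_neg h, abs_zero]; exact le_trans (abs_nonneg (f ω)) (hbound ω)

lemma integrable_cond_one {P : Measure Ω} [IsProbabilityMeasure P]
    {c : Ω → Prop} [DecidablePred c] (hc : MeasurableSet {ω | c ω}) :
    Integrable (fun ω => if c ω then (1:ℝ) else 0) P := by
  refine integrable_cond (p := 0) (X := fun _ => (0 : Fin 0 → ℝ)) hc measurable_const
    (integrable_const 1) ?_
  intro ω; simp

lemma sq_le_S {p : ℕ} (X : Ω → Fin p → ℝ) (ω : Ω) (j : Fin p) :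
    X ω j ^ 2 ≤ ∑ i, X ω i ^ 2 :=
  Finset.single_le_sum (fun i _ => sq_nonneg (X ω i)) (Finset.mem_univ j)

lemma integrable_cond_X {p : ℕ} {P : Measure Ω} [IsProbabilityMeasure P] {X : Ω → Fin p → ℝ}
    (hX : Measurable X) (hmom : Integrable (fun ω => (∑ i, X ω i ^ 2) ^ 2) P)
    {c : Ω → Prop} [DecidablePred c] (hc : MeasurableSet {ω | c ω}) (j : Fin p) :
    Integrable (fun ω => if c ω then X ω j else 0) P := by
  refine integrable_cond (X := X) hc ((measurable_pi_apply j).comp hX)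
    (((integrable_S hX hmom).add (integrable_const 1)).div_const 2) ?_
  intro ω
  have h1 := sq_le_S X ω j
  have h2 := sq_abs (X ω j)
  simp only [Pi.add_apply]
  nlinarith [sq_nonneg (|X ω j| - 1), abs_nonneg (X ω j)]

lemma integrable_cond_XX {p : ℕ} {P : Measure Ω} [IsProbabilityMeasure P] {X : Ω → Fin p → ℝ}
    (hX : Measurable X) (hmom : Integrable (fun ω => (∑ i, X ω i ^ 2) ^ 2) P)
    {c : Ω → Prop} [DecidablePred c] (hc : MeasurableSet {ω | c ω}) (a b : Fin p) :
    Integrable (fun ω => if c ω then X ω a * X ω b else 0) P := by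
  refine integrable_cond (X := X) hc
    (((measurable_pi_apply a).comp hX).mul ((measurable_pi_apply b).comp hX))
    (integrable_S hX hmom) ?_
  intro ω
  have h1 := sq_le_S X ω a
  have h2 := sq_le_S X ω b
  have h3 := abs_mul (X ω a) (X ω b)
  nlinarith [sq_nonneg (|X ω a| - |X ω b|), sq_abs (X ω a), sq_abs (X ω b),
    abs_nonneg (X ω a), abs_nonneg (X ω b)]

lemma integral_ite_one {P : Measure Ω} [IsProbabilityMeasure P]
    {c : Ω → Prop} [DecidablePred c] (hc : MeasurableSet {ω | c ω}) :
    ∫ ω, (if c ω then (1:ℝ) else 0) ∂P = (P {ω | c ω}).toReal := by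
  rw [show (fun ω => if c ω then (1:ℝ) else 0)
      = Set.indicator {ω | c ω} (fun _ => (1:ℝ)) from funext fun ω => by
        simp [Set.indicator_apply]]
  rw [integral_indicator_const (1:ℝ) hc, smul_eq_mul, mul_one]
  rfl

lemma VU_apply {p M : ℕ} {P : Measure Ω} [IsProbabilityMeasure P] {X : Ω → Fin p → ℝ}
    {U : Ω → Fin M} (hX : Measurable X) (hU : Measurable U)
    (hmom : Integrable (fun ω => (∑ i, X ω i ^ 2) ^ 2) P)
    (m : Fin M) (hpm : 0 < pU P U m) (a b : Fin p) :
    VU P X U m a b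
      = (pU P U m)⁻¹ * (∫ ω, (if U ω = m then X ω a * X ω b else 0) ∂P)
        - muU P X U m a * muU P X U m b := by
  have hcm : MeasurableSet {ω | U ω = m} := hU (measurableSet_singleton m)
  have hfab := integrable_cond_XX hX hmom hcm a b
  have hfa := integrable_cond_X hX hmom hcm a
  have hfb := integrable_cond_X hX hmom hcm b
  have hone := integrable_cond_one (P := P) hcm
  have hfun : (fun ω => if U ω = m then
        (X ω a - muU P X U m a) * (X ω b - muU P X U m b) else 0)
      = fun ω => (if U ω = m then X ω a * X ω b else 0)
          - muU P X U m a * (if U ω = m then X ω b else 0)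
          - muU P X U m b * (if U ω = m then X ω a else 0)
          + muU P X U m a * muU P X U m b * (if U ω = m then 1 else 0) := by
    funext ω
    by_cases hcc : U ω = m <;> simp [hcc] <;> ring
  have hVUdef : VU P X U m a b = (pU P U m)⁻¹ *
      ∫ ω, (if U ω = m then
        (X ω a - muU P X U m a) * (X ω b - muU P X U m b) else 0) ∂P := rfl
  have i2 : Integrable (fun ω => muU P X U m a * (if U ω = m then X ω b else 0)) P :=
    hfb.const_mul _
  have i3 : Integrable (fun ω => muU P X U m b * (if U ω = m then X ω a else 0)) P :=
    hfa.const_mul _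
  have i4 : Integrable
      (fun ω => muU P X U m a * muU P X U m b * (if U ω = m then (1:ℝ) else 0)) P :=
    hone.const_mul _
  have i12 : Integrable (fun ω => (if U ω = m then X ω a * X ω b else 0)
      - muU P X U m a * (if U ω = m then X ω b else 0)) P := hfab.sub i2
  have i123 : Integrable (fun ω => (if U ω = m then X ω a * X ω b else 0)
      - muU P X U m a * (if U ω = m then X ω b else 0)
      - muU P X U m b * (if U ω = m then X ω a else 0)) P := i12.sub i3
  rw [hVUdef, hfun]
  rw [integral_add i123 i4, integral_sub i12 i3, integral_sub hfab i2,
    integral_const_mul, integral_const_mul, integral_const_mul,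
    integral_ite_one hcm]
  have hPm : (P {ω | U ω = m}).toReal = pU P U m := rfl
  rw [hPm]
  have hma : muU P X U m a = (pU P U m)⁻¹ * ∫ ω, (if U ω = m then X ω a else 0) ∂P := rfl
  have hmb : muU P X U m b = (pU P U m)⁻¹ * ∫ ω, (if U ω = m then X ω b else 0) ∂P := rfl
  rw [hma, hmb]
  field_simp
  ring

end AuxLemmas

set_option maxHeartbeats 2000000 in
/-- Theorem 1(i): almost sure consistency of `ξ̂_K`. -/
theorem stmt14
    {Ω : Type} [MeasurableSpace Ω] (P : Measure Ω) [IsProbabilityMeasure P]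
    (p q M : ℕ) (hp : 1 ≤ p) (hq : 2 ≤ q) (hM : 1 ≤ M)
    (X : Ω → Fin p → ℝ) (U : Ω → Fin M) (Z : Ω → Fin q)
    (hX : Measurable X) (hU : Measurable U) (hZ : Measurable Z)
    (hmom : Integrable (fun ω => (∑ i, X ω i ^ 2) ^ 2) P)
    (hpU : ∀ m, 0 < pU P U m) (hpZU : ∀ l m, 0 < pZU P U Z l m)
    (hV : ∀ m, (VU P X U m).PosDef)
    (Xs : ℕ → Ω → Fin p → ℝ) (Us : ℕ → Ω → Fin M) (Zs : ℕ → Ω → Fin q)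
    (hiid : IsIIDSample P X U Z Xs Us Zs)
    :
    ∀ (K : Finset (Fin p)), K.Nonempty →
      ∀ᵐ ω ∂P,
        Tendsto (fun n => xiKhat Xs Us Zs K n ω) atTop (nhds (xiK P X U Z K)) := by
  intro K _hK
  classical
  -- measurable sets
  have hcmU : ∀ m : Fin M, MeasurableSet {ω | U ω = m} :=
    fun m => hU (measurableSet_singleton m)
  have hcmZU : ∀ (l : Fin q) (m : Fin M), MeasurableSet {ω | Z ω = l ∧ U ω = m} :=
    fun l m => (hZ (measurableSet_singleton l)).inter (hU (measurableSet_singleton m))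
  -- SLLN for the basic empirical averages
  have E1 : ∀ᵐ ω ∂P, ∀ m : Fin M,
      Tendsto (fun n => NU Us m n ω / (n : ℝ)) atTop (nhds (pU P U m)) := by
    rw [ae_all_iff]
    intro m
    have hg : Measurable (fun t : (Fin p → ℝ) × Fin M × Fin q =>
        if t.2.1 = m then (1:ℝ) else 0) :=
      Measurable.ite (measurable_snd.fst (measurableSet_singleton m))
        measurable_const measurable_const
    have hint : Integrable (fun ω => if U ω = m then (1:ℝ) else 0) P :=
      integrable_cond_one (hcmU m)
    have h := slln P hiid _ hg hint
    have heq : ∫ ω, (fun t : (Fin p → ℝ) × Fin M × Fin q =>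
        if t.2.1 = m then (1:ℝ) else 0) (X ω, U ω, Z ω) ∂P = pU P U m :=
      integral_ite_one (hcmU m)
    rw [heq] at h
    exact h
  have E2 : ∀ᵐ ω ∂P, ∀ (l : Fin q) (m : Fin M),
      Tendsto (fun n => NZU Us Zs l m n ω / (n : ℝ)) atTop (nhds (pZU P U Z l m)) := by
    rw [ae_all_iff]
    intro l
    rw [ae_all_iff]
    intro m
    have hg : Measurable (fun t : (Fin p → ℝ) × Fin M × Fin q =>
        if t.2.2 = l ∧ t.2.1 = m then (1:ℝ) else 0) :=
      Measurable.ite ((measurable_snd.snd (measurableSet_singleton l)).inter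
        (measurable_snd.fst (measurableSet_singleton m))) measurable_const measurable_const
    have hint : Integrable (fun ω => if Z ω = l ∧ U ω = m then (1:ℝ) else 0) P :=
      integrable_cond_one (hcmZU l m)
    have h := slln P hiid _ hg hint
    have heq : ∫ ω, (fun t : (Fin p → ℝ) × Fin M × Fin q =>
        if t.2.2 = l ∧ t.2.1 = m then (1:ℝ) else 0) (X ω, U ω, Z ω) ∂P = pZU P U Z l m :=
      integral_ite_one (hcmZU l m)
    rw [heq] at h
    exact h
  have E3 : ∀ᵐ ω ∂P, ∀ (m : Fin M) (j : Fin p),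
      Tendsto (fun n =>
          (∑ i ∈ Finset.range n, if Us i ω = m then Xs i ω j else 0) / (n : ℝ)) atTop
        (nhds (∫ ω', (if U ω' = m then X ω' j else 0) ∂P)) := by
    rw [ae_all_iff]
    intro m
    rw [ae_all_iff]
    intro j
    have hg : Measurable (fun t : (Fin p → ℝ) × Fin M × Fin q =>
        if t.2.1 = m then t.1 j else 0) :=
      Measurable.ite (measurable_snd.fst (measurableSet_singleton m))
        ((measurable_pi_apply j).comp measurable_fst) measurable_const
    have hint : Integrable (fun ω => if U ω = m then X ω j else 0) P :=
      integrable_cond_X hX hmom (hcmU m) j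
    exact (slln P hiid _ hg hint).mono fun ω hω => hω
  have E4 : ∀ᵐ ω ∂P, ∀ (l : Fin q) (m : Fin M) (j : Fin p),
      Tendsto (fun n =>
          (∑ i ∈ Finset.range n, if Zs i ω = l ∧ Us i ω = m then Xs i ω j else 0) / (n : ℝ))
        atTop (nhds (∫ ω', (if Z ω' = l ∧ U ω' = m then X ω' j else 0) ∂P)) := by
    rw [ae_all_iff]
    intro l
    rw [ae_all_iff]
    intro m
    rw [ae_all_iff]
    intro j
    have hg : Measurable (fun t : (Fin p → ℝ) × Fin M × Fin q =>
        if t.2.2 = l ∧ t.2.1 = m then t.1 j else 0) :=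
      Measurable.ite ((measurable_snd.snd (measurableSet_singleton l)).inter
        (measurable_snd.fst (measurableSet_singleton m)))
        ((measurable_pi_apply j).comp measurable_fst) measurable_const
    have hint : Integrable (fun ω => if Z ω = l ∧ U ω = m then X ω j else 0) P :=
      integrable_cond_X hX hmom (hcmZU l m) j
    exact (slln P hiid _ hg hint).mono fun ω hω => hω
  have E5 : ∀ᵐ ω ∂P, ∀ (m : Fin M) (a b : Fin p),
      Tendsto (fun n =>
          (∑ i ∈ Finset.range n, if Us i ω = m then Xs i ω a * Xs i ω b else 0) / (n : ℝ))
        atTop (nhds (∫ ω', (if U ω' = m then X ω' a * X ω' b else 0) ∂P)) := by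
    rw [ae_all_iff]
    intro m
    rw [ae_all_iff]
    intro a
    rw [ae_all_iff]
    intro b
    have hg : Measurable (fun t : (Fin p → ℝ) × Fin M × Fin q =>
        if t.2.1 = m then t.1 a * t.1 b else 0) :=
      Measurable.ite (measurable_snd.fst (measurableSet_singleton m))
        (((measurable_pi_apply a).comp measurable_fst).mul
          ((measurable_pi_apply b).comp measurable_fst)) measurable_const
    have hint : Integrable (fun ω => if U ω = m then X ω a * X ω b else 0) P :=
      integrable_cond_XX hX hmom (hcmU m) a b
    exact (slln P hiid _ hg hint).mono fun ω hω => hω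
  filter_upwards [E1, E2, E3, E4, E5] with ω h1w h2w h3w h4w h5w
  -- deterministic part
  show Tendsto (fun n => ∑ m, pUhat Us m n ω ^ 2 * xiKmhat Xs Us Zs K m n ω) atTop
    (nhds (∑ m, pU P U m ^ 2 * xiKm P X U Z K m))
  refine tendsto_finset_sum _ fun m _ => ?_
  have hpm := hpU m
  have hmu : ∀ j, Tendsto (fun n => muUhat Xs Us m n ω j) atTop (nhds (muU P X U m j)) := by
    intro j
    have h := tendsto_ratio (h3w m j) (h1w m) hpm.ne'
    have hl : muU P X U m j
        = (∫ ω', (if U ω' = m then X ω' j else 0) ∂P) / pU P U m := inv_mul_eq_div _ _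
    rw [hl]
    exact h.congr fun n => (inv_mul_eq_div _ _).symm
  have hmuZ : ∀ (l : Fin q) (j : Fin p),
      Tendsto (fun n => muZUhat Xs Us Zs l m n ω j) atTop (nhds (muZU P X U Z l m j)) := by
    intro l j
    have h := tendsto_ratio (h4w l m j) (h2w l m) (hpZU l m).ne'
    have hl : muZU P X U Z l m j
        = (∫ ω', (if Z ω' = l ∧ U ω' = m then X ω' j else 0) ∂P) / pZU P U Z l m :=
      inv_mul_eq_div _ _
    rw [hl]
    exact h.congr fun n => (inv_mul_eq_div _ _).symm
  have hVab : ∀ a b, Tendsto (fun n => VUhat Xs Us m n ω a b) atTop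
      (nhds (VU P X U m a b)) := by
    intro a b
    have h := (tendsto_ratio (h5w m a b) (h1w m) hpm.ne').sub ((hmu a).mul (hmu b))
    rw [VU_apply hX hU hmom m hpm a b, inv_mul_eq_div]
    exact h.congr fun n => by
      rw [VUhat_apply Xs Us m n ω a b, inv_mul_eq_div]
  have hVmat : Tendsto (fun n => VUhat Xs Us m n ω) atTop (nhds (VU P X U m)) :=
    tendsto_matrix fun a b => hVab a b
  have hQmat : Tendsto (fun n => QK K (VUhat Xs Us m n ω)) atTop
      (nhds (QK K (VU P X U m))) :=
    ((continuousAt_QK K (hV m)).tendsto).comp hVmat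
  have hmulQ : Tendsto (fun n => VUhat Xs Us m n ω * QK K (VUhat Xs Us m n ω)) atTop
      (nhds (VU P X U m * QK K (VU P X U m))) := by
    have hcont : Continuous (fun z : Matrix (Fin p) (Fin p) ℝ × Matrix (Fin p) (Fin p) ℝ =>
        z.1 * z.2) := continuous_fst.matrix_mul continuous_snd
    exact (hcont.tendsto _).comp (hVmat.prodMk_nhds hQmat)
  have hWmat : Tendsto (fun n => (1 : Matrix (Fin p) (Fin p) ℝ)
        - VUhat Xs Us m n ω * QK K (VUhat Xs Us m n ω)) atTop
      (nhds ((1 : Matrix (Fin p) (Fin p) ℝ) - VU P X U m * QK K (VU P X U m))) :=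
    tendsto_const_nhds.sub hmulQ
  have hW : ∀ i j, Tendsto (fun n => ((1 : Matrix (Fin p) (Fin p) ℝ)
        - VUhat Xs Us m n ω * QK K (VUhat Xs Us m n ω)) i j) atTop
      (nhds (((1 : Matrix (Fin p) (Fin p) ℝ)
        - VU P X U m * QK K (VU P X U m)) i j)) :=
    fun i j => tendsto_pi_nhds.1 (tendsto_pi_nhds.1 hWmat i) j
  have hpcond : ∀ l : Fin q, Tendsto (fun n => pcondhat Us Zs l m n ω) atTop
      (nhds (pcond P U Z l m)) :=
    fun l => tendsto_ratio (h2w l m) (h1w m) hpm.ne'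
  refine Tendsto.mul ((h1w m).pow 2) ?_
  show Tendsto (fun n => ∑ l : Fin q, pcondhat Us Zs l m n ω ^ 2 *
      esq ((1 - VUhat Xs Us m n ω * QK K (VUhat Xs Us m n ω)) *ᵥ
        (muZUhat Xs Us Zs l m n ω - muUhat Xs Us m n ω))) atTop
    (nhds (∑ l : Fin q, pcond P U Z l m ^ 2 *
      esq ((1 - VU P X U m * QK K (VU P X U m)) *ᵥ (muZU P X U Z l m - muU P X U m))))
  refine tendsto_finset_sum _ fun l _ => Tendsto.mul ((hpcond l).pow 2) ?_
  show Tendsto (fun n => ∑ i, (((1 : Matrix (Fin p) (Fin p) ℝ)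
        - VUhat Xs Us m n ω * QK K (VUhat Xs Us m n ω)) *ᵥ
        (muZUhat Xs Us Zs l m n ω - muUhat Xs Us m n ω)) i ^ 2) atTop
    (nhds (∑ i, (((1 : Matrix (Fin p) (Fin p) ℝ)
        - VU P X U m * QK K (VU P X U m)) *ᵥ (muZU P X U Z l m - muU P X U m)) i ^ 2))
  refine tendsto_finset_sum _ fun i _ => Tendsto.pow ?_ 2
  show Tendsto (fun n => ∑ j, ((1 : Matrix (Fin p) (Fin p) ℝ)
        - VUhat Xs Us m n ω * QK K (VUhat Xs Us m n ω)) i j *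
        (muZUhat Xs Us Zs l m n ω - muUhat Xs Us m n ω) j) atTop
    (nhds (∑ j, ((1 : Matrix (Fin p) (Fin p) ℝ)
        - VU P X U m * QK K (VU P X U m)) i j * (muZU P X U Z l m - muU P X U m) j))
  refine tendsto_finset_sum _ fun j _ => Tendsto.mul (hW i j) ?_
  show Tendsto (fun n => muZUhat Xs Us Zs l m n ω j - muUhat Xs Us m n ω j) atTop
    (nhds (muZU P X U Z l m j - muU P X U m j))
  exact (hmuZ l j).sub (hmu j)

end ArxivStmt
end
end
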